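/- In the modified game graph G' constructed from a parity game G and a rooted tree decomposition (T, X), for every edge (v, u) of the original game G there exists a directed path from v to u in G' all of whose intermediate vertices are copies v_i of v, and every vertex on this path has the same priority as v except the last, which has the priority of u. -/

import Mathlib

/-- Vertices of the modified game `G'`: original vertices together with copies
`v_i` for every tree-decomposition node `i` containing `v` other than
`first v`. -/
def ModVertex {V I : Type} (X : I → Set V) (first : V → I) : Type :=
  V ⊕ {p : V × I // p.1 ∈ X p.2 ∧ p.2 ≠ first p.1}

/-- Edges of the modified game `G'` (Definition of the modified parity game). -/
def ModEdge {V I : Type} (E : V → V → Prop) (J : I → I → Prop)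
    (X : I → Set V) (first : V → I) :
    ModVertex X first → ModVertex X first → Prop
  | Sum.inl v, Sum.inl u => u ∈ X (first v) ∧ E v u
  | Sum.inl v, Sum.inr w => w.1.1 = v ∧ J (first v) w.1.2
  | Sum.inr w, Sum.inl u => u ∈ X w.1.2 ∧ E w.1.1 u
  | Sum.inr w, Sum.inr w' => w'.1.1 = w.1.1 ∧ J w.1.2 w'.1.2

/-- Priorities in the modified game: every copy `v_i` gets the priority of `v`. -/
def ModPri {V I : Type} {X : I → Set V} {first : V → I} (pri : V → ℕ) :
    ModVertex X first → ℕ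
  | Sum.inl v => pri v
  | Sum.inr w => pri w.1.1

lemma getLast_cons_append_cons {α : Type*} (x : α) (s : List α) (y : α) (t : List α) :
    (x :: (s ++ y :: t)).getLast (List.cons_ne_nil _ _) =
      (y :: t).getLast (List.cons_ne_nil _ _) := by
  rw [List.getLast_congr _ (by simp) (show x :: (s ++ y :: t) = (x :: s) ++ (y :: t) by simp),
    List.getLast_append_of_ne_nil _ (List.cons_ne_nil _ _)]

lemma aux_path {V I : Type} (E : V → V → Prop) (J : I → I → Prop)
    (X : I → Set V) (first : V → I) (pri : V → ℕ) (v u : V) (hvu : E v u) :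
    ∀ (l : List I) (a : I) (c : ModVertex X first),
      ((c = Sum.inl v ∧ a = first v) ∨
        (∃ h : v ∈ X a ∧ a ≠ first v, c = Sum.inr ⟨(v, a), h⟩)) →
      List.Chain J a l →
      (∀ j ∈ l, v ∈ X j ∧ j ≠ first v) →
      u ∈ X ((a :: l).getLast (List.cons_ne_nil _ _)) →
      ∃ (n : ℕ) (p : Fin (n + 1) → ModVertex X first),
        p 0 = c ∧
        p (Fin.last n) = Sum.inl u ∧
        (∀ t : Fin n, ModEdge E J X first (p t.castSucc) (p t.succ)) ∧
        (∀ t : Fin (n + 1), t ≠ 0 → t ≠ Fin.last n →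
          ∃ (i : I) (h : v ∈ X i ∧ i ≠ first v), p t = Sum.inr ⟨(v, i), h⟩) ∧
        (∀ t : Fin (n + 1), t ≠ Fin.last n → ModPri pri (p t) = pri v) ∧
        ModPri pri (p (Fin.last n)) = pri u := by
  intro l
  induction l with
  | nil =>
    intro a c hc _ _ hu
    simp only [List.getLast_singleton] at hu
    refine ⟨1, fun t => if t = 0 then c else Sum.inl u, if_pos rfl, ?_, ?_, ?_, ?_, ?_⟩
    · exact if_neg (by decide)
    · intro t
      have ht : t = 0 := Subsingleton.elim _ _
      subst ht
      have h0 : ((0 : Fin 1).castSucc : Fin 2) = 0 := rfl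
      have h1 : ((0 : Fin 1).succ : Fin 2) ≠ 0 := by decide
      simp only [h0, if_pos rfl, if_neg h1]
      rcases hc with ⟨rfl, rfl⟩ | ⟨h, rfl⟩
      · exact ⟨hu, hvu⟩
      · exact ⟨hu, hvu⟩
    · intro t h0 h1
      exfalso
      have := t.isLt
      have h0' : t.val ≠ 0 := fun h => h0 (Fin.ext h)
      have h1' : t.val ≠ 1 := fun h => h1 (Fin.ext h)
      omega
    · intro t ht
      have ht0 : t = 0 := by
        have := t.isLt
        have h1' : t.val ≠ 1 := fun h => ht (Fin.ext h)
        exact Fin.ext (show t.val = 0 by omega)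
      subst ht0
      simp only [if_pos rfl]
      rcases hc with ⟨rfl, _⟩ | ⟨h, rfl⟩ <;> rfl
    · simp only [if_neg (by decide : (Fin.last 1 : Fin 2) ≠ 0)]; rfl
  | cons b l' ih =>
    intro a c hc hch hmem hu
    have hb : v ∈ X b ∧ b ≠ first v := hmem b List.mem_cons_self
    rcases List.chain_cons.mp hch with ⟨hab, hch'⟩
    have hu' : u ∈ X ((b :: l').getLast (List.cons_ne_nil _ _)) := by
      rwa [List.getLast_cons_cons] at hu
    obtain ⟨n, p, hp0, hplast, hpe, hpint, hppri, hpprilast⟩ :=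
      ih b (Sum.inr ⟨(v, b), hb⟩) (Or.inr ⟨hb, rfl⟩) hch'
        (fun j hj => hmem j (List.mem_cons_of_mem _ hj)) hu'
    refine ⟨n + 1, Fin.cases c p, Fin.cases_zero .., ?_, ?_, ?_, ?_, ?_⟩
    · rw [← Fin.succ_last]; simp only [Fin.cases_succ]; exact hplast
    · intro t
      refine Fin.cases ?_ ?_ t
      · have e1 : ((0 : Fin (n+1)).castSucc : Fin (n+2)) = 0 := rfl
        rw [e1]
        simp only [Fin.cases_zero, Fin.cases_succ]
        rw [hp0]
        rcases hc with ⟨rfl, rfl⟩ | ⟨h, rfl⟩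
        · exact ⟨rfl, hab⟩
        · exact ⟨rfl, hab⟩
      · intro j
        rw [← Fin.succ_castSucc]
        simp only [Fin.cases_succ]
        exact hpe j
    · intro t ht0 htl
      obtain ⟨j, rfl⟩ := Fin.exists_succ_eq_of_ne_zero ht0
      simp only [Fin.cases_succ]
      by_cases hj0 : j = 0
      · subst hj0
        exact ⟨b, hb, hp0⟩
      · have hjl : j ≠ Fin.last n := by
          intro h; subst h; exact htl (Fin.succ_last n)
        exact hpint j hj0 hjl
    · intro t htl
      by_cases ht0 : t = 0
      · subst ht0
        simp only [Fin.cases_zero]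
        rcases hc with ⟨rfl, _⟩ | ⟨h, rfl⟩ <;> rfl
      · obtain ⟨j, rfl⟩ := Fin.exists_succ_eq_of_ne_zero ht0
        simp only [Fin.cases_succ]
        have hjl : j ≠ Fin.last n := by
          intro h; subst h; exact htl (Fin.succ_last n)
        exact hppri j hjl
    · rw [← Fin.succ_last]
      simp only [Fin.cases_succ]
      exact hpprilast

/-- In the modified game graph `G'` built from a parity game and
a rooted (directed) tree decomposition, for every edge `(v, u)` of the original
game there is a directed path in `G'` from `v` to `u` all of whose intermediate
vertices are copies `v_i` of `v`; every vertex on the path has the priority of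
`v` except the last, which has the priority of `u`. -/
theorem stmt_15 {V I : Type} [Fintype I]
    (E : V → V → Prop) (J : I → I → Prop) (r : I)
    (hreach : ∀ i : I, Relation.ReflTransGen J r i)
    (hparent : ∀ i : I, i ≠ r → ∃! p : I, J p i)
    (hroot : ∀ p : I, ¬ J p r)
    (X : I → Set V) (pri : V → ℕ) (first : V → I)
    (hcover : ∀ v u : V, E v u → ∃ i : I, v ∈ X i ∧ u ∈ X i)
    (hfirst₁ : ∀ v : V, v ∈ X (first v))
    (hfirst₂ : ∀ (v : V) (i : I), v ∈ X i → Relation.ReflTransGen J (first v) i)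
    (hconn : ∀ (v : V) (i k j : I), v ∈ X i → v ∈ X j →
      Relation.ReflTransGen J i k → Relation.ReflTransGen J k j → v ∈ X k)
    (v u : V) (hvu : E v u) :
    ∃ (n : ℕ) (p : Fin (n + 1) → ModVertex X first),
      p 0 = Sum.inl v ∧
      p (Fin.last n) = Sum.inl u ∧
      (∀ t : Fin n, ModEdge E J X first (p t.castSucc) (p t.succ)) ∧
      (∀ t : Fin (n + 1), t ≠ 0 → t ≠ Fin.last n →
        ∃ (i : I) (h : v ∈ X i ∧ i ≠ first v), p t = Sum.inr ⟨(v, i), h⟩) ∧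
      (∀ t : Fin (n + 1), t ≠ Fin.last n → ModPri pri (p t) = pri v) ∧
      ModPri pri (p (Fin.last n)) = pri u := by
  classical
  obtain ⟨i, hvXi, huXi⟩ := hcover v u hvu
  have hr : Relation.ReflTransGen J (first v) i := hfirst₂ v i hvXi
  have hex : ∃ n : ℕ, ∃ l : List I, l.length = n ∧ List.Chain J (first v) l ∧
      (first v :: l).getLast (List.cons_ne_nil _ _) = i := by
    obtain ⟨l, h1, h2⟩ := List.exists_isChain_cons_of_relationReflTransGen hr
    exact ⟨l.length, l, rfl, h1, h2⟩
  obtain ⟨l, hlen, hch, hlast⟩ := Nat.find_spec hex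
  -- every element of the minimal chain is distinct from `first v`
  have hne : ∀ j ∈ l, j ≠ first v := by
    intro j hj hjeq
    subst hjeq
    obtain ⟨s, t, rfl⟩ := List.append_of_mem hj
    rcases List.isChain_cons_split.mp hch with ⟨_, hcht⟩
    have hlast' : (first v :: t).getLast (List.cons_ne_nil _ _) = i := by
      rw [← hlast, getLast_cons_append_cons]
    have hPt : ∃ l' : List I, l'.length = t.length ∧ List.Chain J (first v) l' ∧
        (first v :: l').getLast (List.cons_ne_nil _ _) = i := ⟨t, rfl, hcht, hlast'⟩
    have hlt : t.length < Nat.find hex := by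
      rw [← hlen]
      simp only [List.length_append, List.length_cons]
      omega
    exact Nat.find_min hex hlt hPt
  -- every element of the chain contains `v`
  have hmemX : ∀ j ∈ l, v ∈ X j := by
    intro j hj
    obtain ⟨s, t, rfl⟩ := List.append_of_mem hj
    rcases List.isChain_cons_split.mp hch with ⟨hchs, hcht⟩
    have h1 : Relation.ReflTransGen J (first v) j := by
      refine List.relationReflTransGen_of_exists_isChain_cons (s ++ [j]) ?_ ?_
      · exact hchs
      · rw [show (s ++ [j] : List I) = s ++ j :: [] from rfl, getLast_cons_append_cons]
        rfl
    have h2 : Relation.ReflTransGen J j i := by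
      refine List.relationReflTransGen_of_exists_isChain_cons t hcht ?_
      rw [← hlast, getLast_cons_append_cons]
    exact hconn v (first v) j i (hfirst₁ v) hvXi h1 h2
  have hu : u ∈ X ((first v :: l).getLast (List.cons_ne_nil _ _)) := by
    rw [hlast]; exact huXi
  exact aux_path E J X first pri v u hvu l (first v) (Sum.inl v)
    (Or.inl ⟨rfl, rfl⟩) hch (fun j hj => ⟨hmemX j hj, hne j hj⟩) hu
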